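/- In a node independent graph model, for any three distinct nodes i, j, k, the probability that they form a triangle satisfies E[A_{ij}A_{jk}A_{ik}] ≤ sqrt( E[A_{ij}] · E[A_{jk}] · E[A_{ik}] ). -/

import Mathlib

open MeasureTheory

private lemma bdd_integrable {α : Type*} [MeasurableSpace α] {μ : Measure α}
    [IsFiniteMeasure μ] {f : α → ℝ} (hm : AEStronglyMeasurable f μ)
    (h0 : ∀ x, 0 ≤ f x) (h1 : ∀ x, f x ≤ 1) : Integrable f μ :=
  memLp_one_iff_integrable.mp <| MemLp.of_bound hm 1 <| Filter.Eventually.of_forall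
    fun x => by rw [Real.norm_eq_abs, abs_of_nonneg (h0 x)]; exact h1 x

private lemma cs2 {α : Type*} [MeasurableSpace α] {μ : Measure α}
    [IsFiniteMeasure μ] {f g : α → ℝ} (hfm : AEStronglyMeasurable f μ)
    (hgm : AEStronglyMeasurable g μ)
    (hf0 : ∀ x, 0 ≤ f x) (hf1 : ∀ x, f x ≤ 1)
    (hg0 : ∀ x, 0 ≤ g x) (hg1 : ∀ x, g x ≤ 1) :
    ∫ x, f x * g x ∂μ ≤ Real.sqrt (∫ x, f x * f x ∂μ) * Real.sqrt (∫ x, g x * g x ∂μ) := by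
  have hpq : Real.HolderConjugate 2 2 := Real.HolderConjugate.two_two
  have hfb : ∀ x, ‖f x‖ ≤ 1 := fun x => by
    rw [Real.norm_eq_abs, abs_of_nonneg (hf0 x)]; exact hf1 x
  have hgb : ∀ x, ‖g x‖ ≤ 1 := fun x => by
    rw [Real.norm_eq_abs, abs_of_nonneg (hg0 x)]; exact hg1 x
  have hmf : MemLp f (ENNReal.ofReal 2) μ :=
    MemLp.of_bound hfm 1 (Filter.Eventually.of_forall hfb)
  have hmg : MemLp g (ENNReal.ofReal 2) μ :=
    MemLp.of_bound hgm 1 (Filter.Eventually.of_forall hgb)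
  have h := integral_mul_le_Lp_mul_Lq_of_nonneg hpq
    (Filter.Eventually.of_forall hf0) (Filter.Eventually.of_forall hg0) hmf hmg
  have hf2 : ∀ x, f x ^ (2 : ℝ) = f x * f x := fun x => by
    rw [show (2 : ℝ) = ((2 : ℕ) : ℝ) by norm_num, Real.rpow_natCast]; ring
  have hg2 : ∀ x, g x ^ (2 : ℝ) = g x * g x := fun x => by
    rw [show (2 : ℝ) = ((2 : ℕ) : ℝ) by norm_num, Real.rpow_natCast]; ring
  simp only [hf2, hg2] at h
  calc ∫ x, f x * g x ∂μ
      ≤ (∫ x, f x * f x ∂μ) ^ (1 / 2 : ℝ) * (∫ x, g x * g x ∂μ) ^ (1 / 2 : ℝ) := h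
    _ = Real.sqrt (∫ x, f x * f x ∂μ) * Real.sqrt (∫ x, g x * g x ∂μ) := by
        rw [Real.sqrt_eq_rpow, Real.sqrt_eq_rpow]

private lemma sq_le_self {α : Type*} [MeasurableSpace α] {μ : Measure α}
    [IsFiniteMeasure μ] {f : α → ℝ} (hm : AEStronglyMeasurable f μ)
    (h0 : ∀ x, 0 ≤ f x) (h1 : ∀ x, f x ≤ 1) :
    ∫ x, f x * f x ∂μ ≤ ∫ x, f x ∂μ := by
  refine integral_mono (bdd_integrable (hm.mul hm) (fun x => mul_nonneg (h0 x) (h0 x))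
    (fun x => mul_le_one₀ (h1 x) (h0 x) (h1 x))) (bdd_integrable hm h0 h1) fun x => ?_
  calc f x * f x ≤ 1 * f x := mul_le_mul_of_nonneg_right (h1 x) (h0 x)
    _ = f x := one_mul _

theorem node_independent_triangle_probability_bound
    {E : Type*} [MeasurableSpace E]
    (μi μj μk : Measure E)
    [IsProbabilityMeasure μi] [IsProbabilityMeasure μj] [IsProbabilityMeasure μk]
    (e : E × E → ℝ)
    (hmeas : Measurable e)
    (h0 : ∀ q, 0 ≤ e q) (h1 : ∀ q, e q ≤ 1)
    (hsym : ∀ x y, e (x, y) = e (y, x)) :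
    (∫ zi, ∫ zj, ∫ zk, e (zi, zj) * e (zj, zk) * e (zi, zk) ∂μk ∂μj ∂μi) ≤
      Real.sqrt ((∫ zi, ∫ zj, e (zi, zj) ∂μj ∂μi) *
        (∫ zj, ∫ zk, e (zj, zk) ∂μk ∂μj) *
        (∫ zi, ∫ zk, e (zi, zk) ∂μk ∂μi)) := by
  classical
  -- Notation
  set G : E × E → ℝ := fun p => ∫ zj, e (p.1, zj) * e (zj, p.2) ∂μj with hG
  set A : E → ℝ := fun zi => ∫ zj, e (zi, zj) ∂μj with hA
  set B : E → ℝ := fun zk => ∫ zj, e (zj, zk) ∂μj with hB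
  -- basic measurability
  have hGm : StronglyMeasurable G := by
    have : Measurable fun q : (E × E) × E => e (q.1.1, q.2) * e (q.2, q.1.2) :=
      (hmeas.comp (measurable_fst.fst.prodMk measurable_snd)).mul
        (hmeas.comp (measurable_snd.prodMk measurable_fst.snd))
    exact this.stronglyMeasurable.integral_prod_right'
  have hAm : StronglyMeasurable A :=
    (hmeas.stronglyMeasurable).integral_prod_right'
  have hBm : StronglyMeasurable B := by
    have : Measurable fun q : E × E => e (q.2, q.1) :=
      hmeas.comp (measurable_snd.prodMk measurable_fst)
    exact this.stronglyMeasurable.integral_prod_right'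
  -- generic integrability of the bounded kernel slices
  have heint : ∀ (ν : Measure E) [IsProbabilityMeasure ν] (f : E → ℝ),
      Measurable f → (∀ x, 0 ≤ f x) → (∀ x, f x ≤ 1) → Integrable f ν :=
    fun ν _ f hm h0' h1' => bdd_integrable hm.aestronglyMeasurable h0' h1'
  -- bounds on G, A, B
  have hG0 : ∀ p, 0 ≤ G p := fun p =>
    integral_nonneg fun zj => mul_nonneg (h0 _) (h0 _)
  have hG1 : ∀ p, G p ≤ 1 := by
    intro p
    calc G p ≤ ∫ _zj, (1 : ℝ) ∂μj := by
          refine integral_mono (heint μj _ ((hmeas.comp (measurable_const.prodMk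
            measurable_id)).mul (hmeas.comp (measurable_id.prodMk measurable_const)))
            (fun x => mul_nonneg (h0 _) (h0 _))
            (fun x => mul_le_one₀ (h1 _) (h0 _) (h1 _))) (integrable_const 1)
            fun zj => mul_le_one₀ (h1 _) (h0 _) (h1 _)
      _ = 1 := by simp
  have hA0 : ∀ x, 0 ≤ A x := fun x => integral_nonneg fun _ => h0 _
  have hA1 : ∀ x, A x ≤ 1 := by
    intro x
    calc A x ≤ ∫ _zj, (1 : ℝ) ∂μj :=
          integral_mono (heint μj _ (hmeas.comp (measurable_const.prodMk measurable_id))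
            (fun _ => h0 _) (fun _ => h1 _)) (integrable_const 1) fun _ => h1 _
      _ = 1 := by simp
  have hB0 : ∀ x, 0 ≤ B x := fun x => integral_nonneg fun _ => h0 _
  have hB1 : ∀ x, B x ≤ 1 := by
    intro x
    calc B x ≤ ∫ _zj, (1 : ℝ) ∂μj :=
          integral_mono (heint μj _ (hmeas.comp (measurable_id.prodMk measurable_const))
            (fun _ => h0 _) (fun _ => h1 _)) (integrable_const 1) fun _ => h1 _
      _ = 1 := by simp
  -- Step 1: rewrite LHS as an integral over μi.prod μk
  have hL : (∫ zi, ∫ zj, ∫ zk, e (zi, zj) * e (zj, zk) * e (zi, zk) ∂μk ∂μj ∂μi)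
      = ∫ p, G p * e p ∂(μi.prod μk) := by
    have step1 : ∀ zi, (∫ zj, ∫ zk, e (zi, zj) * e (zj, zk) * e (zi, zk) ∂μk ∂μj)
        = ∫ zk, G (zi, zk) * e (zi, zk) ∂μk := by
      intro zi
      rw [integral_integral_swap]
      · refine integral_congr_ae (Filter.Eventually.of_forall fun zk => ?_)
        simp only [hG]
        rw [← integral_mul_const]
      · -- integrability of the uncurried function on μj.prod μk
        refine bdd_integrable ?_ ?_ ?_
        · refine Measurable.aestronglyMeasurable ?_
          exact ((hmeas.comp (measurable_const.prodMk measurable_fst)).mul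
            (hmeas.comp (measurable_fst.prodMk measurable_snd))).mul
            (hmeas.comp (measurable_const.prodMk measurable_snd))
        · exact fun q => mul_nonneg (mul_nonneg (h0 _) (h0 _)) (h0 _)
        · exact fun q => mul_le_one₀ (mul_le_one₀ (h1 _) (h0 _) (h1 _)) (h0 _) (h1 _)
    simp_rw [step1]
    exact integral_integral (μ := μi) (ν := μk) (f := fun zi zk => G (zi, zk) * e (zi, zk))
      (bdd_integrable (hGm.measurable.mul hmeas).aestronglyMeasurable
        (fun p => mul_nonneg (hG0 p) (h0 p))
        (fun p => mul_le_one₀ (hG1 p) (h0 p) (h1 p)))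
  -- Step 2: Cauchy–Schwarz on μi.prod μk
  have hCS : ∫ p, G p * e p ∂(μi.prod μk)
      ≤ Real.sqrt (∫ p, G p * G p ∂(μi.prod μk)) *
        Real.sqrt (∫ p, e p * e p ∂(μi.prod μk)) :=
    cs2 hGm.aestronglyMeasurable hmeas.aestronglyMeasurable hG0 hG1 h0 h1
  -- Step 3: bound ∫ G² by (∫A)·(∫B)
  have hGsq : ∀ p : E × E, G p * G p ≤ A p.1 * B p.2 := by
    intro p
    have h₁ : G p ≤ Real.sqrt (∫ zj, e (p.1, zj) * e (p.1, zj) ∂μj) *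
        Real.sqrt (∫ zj, e (zj, p.2) * e (zj, p.2) ∂μj) :=
      cs2 (hmeas.comp (measurable_const.prodMk measurable_id)).aestronglyMeasurable
        (hmeas.comp (measurable_id.prodMk measurable_const)).aestronglyMeasurable
        (fun _ => h0 _) (fun _ => h1 _) (fun _ => h0 _) (fun _ => h1 _)
    have h₂ : (∫ zj, e (p.1, zj) * e (p.1, zj) ∂μj) ≤ A p.1 :=
      sq_le_self (hmeas.comp (measurable_const.prodMk measurable_id)).aestronglyMeasurable
        (fun _ => h0 _) (fun _ => h1 _)
    have h₃ : (∫ zj, e (zj, p.2) * e (zj, p.2) ∂μj) ≤ B p.2 :=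
      sq_le_self (hmeas.comp (measurable_id.prodMk measurable_const)).aestronglyMeasurable
        (fun _ => h0 _) (fun _ => h1 _)
    have h₄ : G p ≤ Real.sqrt (A p.1) * Real.sqrt (B p.2) :=
      h₁.trans (mul_le_mul (Real.sqrt_le_sqrt h₂) (Real.sqrt_le_sqrt h₃)
        (Real.sqrt_nonneg _) (Real.sqrt_nonneg _))
    calc G p * G p ≤ (Real.sqrt (A p.1) * Real.sqrt (B p.2)) *
          (Real.sqrt (A p.1) * Real.sqrt (B p.2)) :=
        mul_le_mul h₄ h₄ (hG0 p) (mul_nonneg (Real.sqrt_nonneg _) (Real.sqrt_nonneg _))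
      _ = (Real.sqrt (A p.1) * Real.sqrt (A p.1)) *
          (Real.sqrt (B p.2) * Real.sqrt (B p.2)) := by ring
      _ = A p.1 * B p.2 := by
          rw [Real.mul_self_sqrt (hA0 _), Real.mul_self_sqrt (hB0 _)]
  have hGint : ∫ p, G p * G p ∂(μi.prod μk) ≤ (∫ zi, A zi ∂μi) * (∫ zk, B zk ∂μk) := by
    calc ∫ p, G p * G p ∂(μi.prod μk) ≤ ∫ p : E × E, A p.1 * B p.2 ∂(μi.prod μk) := by
          refine integral_mono (bdd_integrable (hGm.mul hGm).aestronglyMeasurable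
            (fun p => mul_nonneg (hG0 p) (hG0 p))
            (fun p => mul_le_one₀ (hG1 p) (hG0 p) (hG1 p)))
            (bdd_integrable ((hAm.comp_measurable measurable_fst).mul
              (hBm.comp_measurable measurable_snd)).aestronglyMeasurable
              (fun p => mul_nonneg (hA0 _) (hB0 _))
              (fun p => mul_le_one₀ (hA1 _) (hB0 _) (hB1 _))) hGsq
      _ = (∫ zi, A zi ∂μi) * (∫ zk, B zk ∂μk) := integral_prod_mul A B
  -- Step 4: bound ∫ e² by ∫ e and rewrite iterated integrals
  have heik : ∫ p, e p * e p ∂(μi.prod μk) ≤ ∫ zi, ∫ zk, e (zi, zk) ∂μk ∂μi := by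
    have h₁ : ∫ p, e p * e p ∂(μi.prod μk) ≤ ∫ p, e p ∂(μi.prod μk) :=
      sq_le_self hmeas.aestronglyMeasurable h0 h1
    have h₂ : ∫ p, e p ∂(μi.prod μk) = ∫ zi, ∫ zk, e (zi, zk) ∂μk ∂μi :=
      (integral_integral (μ := μi) (ν := μk) (f := fun zi zk => e (zi, zk))
        (bdd_integrable hmeas.aestronglyMeasurable h0 h1)).symm
    exact h₁.trans_eq h₂
  -- identify ∫A and ∫B with the statement's iterated integrals
  have hAeq : (∫ zi, A zi ∂μi) = ∫ zi, ∫ zj, e (zi, zj) ∂μj ∂μi := rfl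
  have hBeq : (∫ zk, B zk ∂μk) = ∫ zj, ∫ zk, e (zj, zk) ∂μk ∂μj := by
    rw [hB]
    exact (integral_integral_swap (f := fun zj zk => e (zj, zk))
      (bdd_integrable hmeas.aestronglyMeasurable h0 h1)).symm
  -- nonnegativity of the three edge probabilities
  have hE1 : 0 ≤ ∫ zi, ∫ zj, e (zi, zj) ∂μj ∂μi :=
    integral_nonneg fun _ => integral_nonneg fun _ => h0 _
  have hE2 : 0 ≤ ∫ zj, ∫ zk, e (zj, zk) ∂μk ∂μj :=
    integral_nonneg fun _ => integral_nonneg fun _ => h0 _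
  have hE3 : 0 ≤ ∫ zi, ∫ zk, e (zi, zk) ∂μk ∂μi :=
    integral_nonneg fun _ => integral_nonneg fun _ => h0 _
  -- combine everything
  rw [hL]
  refine hCS.trans ?_
  have hs1 : Real.sqrt (∫ p, G p * G p ∂(μi.prod μk)) ≤
      Real.sqrt ((∫ zi, ∫ zj, e (zi, zj) ∂μj ∂μi) * (∫ zj, ∫ zk, e (zj, zk) ∂μk ∂μj)) := by
    refine Real.sqrt_le_sqrt ?_
    rw [← hAeq, ← hBeq]; exact hGint
  have hs2 : Real.sqrt (∫ p, e p * e p ∂(μi.prod μk)) ≤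
      Real.sqrt (∫ zi, ∫ zk, e (zi, zk) ∂μk ∂μi) := Real.sqrt_le_sqrt heik
  calc Real.sqrt (∫ p, G p * G p ∂(μi.prod μk)) *
        Real.sqrt (∫ p, e p * e p ∂(μi.prod μk))
      ≤ Real.sqrt ((∫ zi, ∫ zj, e (zi, zj) ∂μj ∂μi) * (∫ zj, ∫ zk, e (zj, zk) ∂μk ∂μj)) *
        Real.sqrt (∫ zi, ∫ zk, e (zi, zk) ∂μk ∂μi) :=
      mul_le_mul hs1 hs2 (Real.sqrt_nonneg _) (Real.sqrt_nonneg _)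
    _ = Real.sqrt ((∫ zi, ∫ zj, e (zi, zj) ∂μj ∂μi) *
        (∫ zj, ∫ zk, e (zj, zk) ∂μk ∂μj) * (∫ zi, ∫ zk, e (zi, zk) ∂μk ∂μi)) := by
      rw [← Real.sqrt_mul (mul_nonneg hE1 hE2)]
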